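/- Let U be a real normed vector space, let Ŝ : U → U be a map satisfying the linear growth bound ‖Ŝ(u)‖ ≤ a + c‖u‖ for all u ∈ U, where a ≥ 0 and c ≥ 0, let λ ∈ (0,1), and fix reals α and β > 0. Define ρ : ℝ → ℝ by ρ(s) = 1/(1 + exp(β(s − α))) and define the post-processed map Ŝ' : U → U by Ŝ'(u) = ρ(‖u‖)·Ŝ(u) + (1 − ρ(‖u‖))·λu. Then there exists R > 0 such that for every u ∈ U with ‖u‖ ≥ R one has ‖Ŝ'(u)‖ ≤ ((1 + λ)/2)·‖u‖. -/

import Mathlib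

open Filter Topology Real

/-- The post-processed model `Shat' u = ρ(‖u‖) Shat u + (1 - ρ(‖u‖)) λ u`,
combining a learned map `Shat` of at most linear growth with the dissipative safety
map `u ↦ λ u` via the sigmoid `ρ(s) = 1/(1 + exp(β (s - α)))`, contracts norms by a
factor `(1 + λ)/2 < 1` outside a sufficiently large ball. -/
theorem stmt_6
    {U : Type*} [NormedAddCommGroup U] [NormedSpace ℝ U]
    (Shat : U → U) (a c : ℝ) (ha : 0 ≤ a) (hc : 0 ≤ c)
    (hgrowth : ∀ u : U, ‖Shat u‖ ≤ a + c * ‖u‖)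
    (lam : ℝ) (hlam : lam ∈ Set.Ioo (0 : ℝ) 1)
    (α β : ℝ) (hβ : 0 < β)
    (ρ : ℝ → ℝ) (hρ : ∀ s : ℝ, ρ s = 1 / (1 + Real.exp (β * (s - α))))
    (Shat' : U → U)
    (hS' : ∀ u : U, Shat' u = ρ ‖u‖ • Shat u + (1 - ρ ‖u‖) • (lam • u)) :
    ∃ R : ℝ, 0 < R ∧
      ∀ u : U, R ≤ ‖u‖ → ‖Shat' u‖ ≤ ((1 + lam) / 2) * ‖u‖ := by
  obtain ⟨hlam0, hlam1⟩ := hlam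
  set ε : ℝ := (1 - lam) / 2 with hε
  have hεpos : 0 < ε := by simp [hε]; linarith
  -- basic facts about ρ
  have hρpos : ∀ s : ℝ, 0 < ρ s := fun s => by
    rw [hρ]; positivity
  have hρle1 : ∀ s : ℝ, ρ s ≤ 1 := fun s => by
    rw [hρ, div_le_one (by positivity)]
    nlinarith [Real.exp_pos (β * (s - α))]
  have hρle : ∀ s : ℝ, ρ s ≤ Real.exp (-(β * (s - α))) := fun s => by
    rw [hρ, Real.exp_neg, div_le_iff₀ (by positivity), inv_mul_eq_div,
      le_div_iff₀ (Real.exp_pos _)]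
    nlinarith [Real.exp_pos (β * (s - α))]
  -- decay of ρ s * (a + c s)
  set g : ℝ → ℝ := fun s => ρ s * (a + c * s) with hg
  have hlin : Tendsto (fun s : ℝ => β * (s - α)) atTop atTop := by
    exact (tendsto_atTop_add_const_right _ (-α) tendsto_id).const_mul_atTop hβ
  have hpoly : Tendsto (fun x : ℝ => (Polynomial.C a +
      Polynomial.C c * (Polynomial.C β⁻¹ * Polynomial.X + Polynomial.C α)).eval x /
      Real.exp x) atTop (𝓝 0) := Polynomial.tendsto_div_exp_atTop _
  have hcomp : Tendsto (fun s : ℝ => (a + c * s) / Real.exp (β * (s - α))) atTop (𝓝 0) := by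
    have := hpoly.comp hlin
    refine this.congr (fun s => ?_)
    have hβ' : β ≠ 0 := ne_of_gt hβ
    simp only [Function.comp, Polynomial.eval_add, Polynomial.eval_mul, Polynomial.eval_C,
      Polynomial.eval_X]
    field_simp
    ring
  have hgtendsto : Tendsto g atTop (𝓝 0) := by
    refine squeeze_zero' ?_ ?_ hcomp
    · filter_upwards [eventually_ge_atTop (0 : ℝ)] with s hs
      have := hρpos s
      have : 0 ≤ a + c * s := by positivity
      positivity
    · filter_upwards [eventually_ge_atTop (0 : ℝ)] with s hs
      have h1 : 0 ≤ a + c * s := by positivity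
      calc g s ≤ Real.exp (-(β * (s - α))) * (a + c * s) :=
            mul_le_mul_of_nonneg_right (hρle s) h1
        _ = (a + c * s) / Real.exp (β * (s - α)) := by
            rw [Real.exp_neg]; ring
  have hev : ∀ᶠ s in atTop, g s ≤ ε := by
    have := hgtendsto.eventually (eventually_le_nhds hεpos)
    exact this
  obtain ⟨R₀, hR₀⟩ := eventually_atTop.mp hev
  refine ⟨max R₀ 1, lt_max_of_lt_right one_pos, fun u hu => ?_⟩
  set s := ‖u‖ with hs
  have hs1 : (1 : ℝ) ≤ s := le_trans (le_max_right _ _) hu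
  have hsR₀ : R₀ ≤ s := le_trans (le_max_left _ _) hu
  have hs0 : 0 ≤ s := le_trans zero_le_one hs1
  have hρs0 : 0 ≤ ρ s := (hρpos s).le
  have hρs1 : ρ s ≤ 1 := hρle1 s
  calc ‖Shat' u‖ = ‖ρ s • Shat u + (1 - ρ s) • (lam • u)‖ := by rw [hS']
    _ ≤ ‖ρ s • Shat u‖ + ‖(1 - ρ s) • (lam • u)‖ := norm_add_le _ _
    _ = ρ s * ‖Shat u‖ + (1 - ρ s) * (lam * s) := by
        simp only [norm_smul, Real.norm_eq_abs, abs_of_nonneg hρs0,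
          abs_of_nonneg (show (0:ℝ) ≤ 1 - ρ s by linarith), abs_of_nonneg hlam0.le]
        rfl
    _ ≤ ρ s * (a + c * s) + lam * s := by
        have h1 : ρ s * ‖Shat u‖ ≤ ρ s * (a + c * s) :=
          mul_le_mul_of_nonneg_left (hgrowth u) hρs0
        have h2 : (1 - ρ s) * (lam * s) ≤ lam * s := by
          nlinarith [mul_nonneg hlam0.le hs0]
        linarith
    _ ≤ ε + lam * s := by
        have hgs := hR₀ s hsR₀
        simp only [hg] at hgs
        linarith
    _ ≤ ε * s + lam * s := by nlinarith
    _ = ((1 + lam) / 2) * s := by rw [hε]; ring
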